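/- Let f: ℝ × ℝ^d → ℝ^d be Lipschitz continuous in its second argument with constant L, and let A: [0,1]×[0,1] → ℝ be a continuous coefficient function. If the step size h > 0 satisfies h < 1 / (L · max_{τ∈[0,1]} ∫₀¹ |A(τ,σ)| dσ), then the fixed-point equation Z(τ) = z₀ + h ∫₀¹ A(τ,σ) f(t₀ + C(σ)h, Z(σ)) dσ for continuous Z: [0,1] → ℝ^d has a unique solution. -/

import Mathlib

open MeasureTheory

section Aux

variable {d : ℕ}

noncomputable def csRK_pi : ℝ → ℝ := fun t => (Set.projIcc (0:ℝ) 1 zero_le_one t : ℝ)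

lemma csRK_pi_cont : Continuous csRK_pi :=
  continuous_subtype_val.comp continuous_projIcc

lemma csRK_pi_mem (t : ℝ) : csRK_pi t ∈ Set.Icc (0:ℝ) 1 :=
  (Set.projIcc (0:ℝ) 1 zero_le_one t).2

lemma csRK_pi_id {t : ℝ} (ht : t ∈ Set.Icc (0:ℝ) 1) : csRK_pi t = t := by
  simp [csRK_pi, Set.projIcc_of_mem zero_le_one ht]

end Aux

set_option maxHeartbeats 1000000 in
/-- Existence and uniqueness of the internal stages of a continuous-stage
Runge–Kutta method under the step-size restriction
h < 1 / (L · max_{τ∈[0,1]} ∫₀¹ |A(τ,σ)| dσ). -/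
theorem csRK_stage_exists_unique
    (d : ℕ) (L : ℝ) (hL : 0 < L)
    (f : ℝ → EuclideanSpace ℝ (Fin d) → EuclideanSpace ℝ (Fin d))
    (hf : ∀ t x y, ‖f t x - f t y‖ ≤ L * ‖x - y‖)
    (hfc : Continuous fun p : ℝ × EuclideanSpace ℝ (Fin d) => f p.1 p.2)
    (A : ℝ → ℝ → ℝ)
    (hA : ContinuousOn (fun p : ℝ × ℝ => A p.1 p.2) (Set.Icc 0 1 ×ˢ Set.Icc 0 1))
    (C : ℝ → ℝ) (hC : ContinuousOn C (Set.Icc 0 1))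
    (hCmap : Set.MapsTo C (Set.Icc 0 1) (Set.Icc 0 1))
    (z₀ : EuclideanSpace ℝ (Fin d)) (t₀ : ℝ) (h : ℝ) (hh : 0 < h)
    (hstep : h < 1 / (L * sSup ((fun τ => ∫ σ in (0:ℝ)..1, |A τ σ|) '' Set.Icc 0 1))) :
    ∃ Z : ℝ → EuclideanSpace ℝ (Fin d), ContinuousOn Z (Set.Icc 0 1) ∧
      (∀ τ ∈ Set.Icc (0:ℝ) 1,
        Z τ = z₀ + h • ∫ σ in (0:ℝ)..1, A τ σ • f (t₀ + C σ * h) (Z σ)) ∧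
      (∀ W : ℝ → EuclideanSpace ℝ (Fin d), ContinuousOn W (Set.Icc 0 1) →
        (∀ τ ∈ Set.Icc (0:ℝ) 1,
          W τ = z₀ + h • ∫ σ in (0:ℝ)..1, A τ σ • f (t₀ + C σ * h) (W σ)) →
        Set.EqOn W Z (Set.Icc 0 1)) := by
  classical
  set I : Set ℝ := Set.Icc 0 1 with hIdef
  -- primed (globally continuous) versions of A, C
  set A' : ℝ → ℝ → ℝ := fun τ σ => A (csRK_pi τ) (csRK_pi σ) with hA'def
  have hA'c : Continuous fun p : ℝ × ℝ => A' p.1 p.2 := by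
    apply hA.comp_continuous
      ((csRK_pi_cont.comp continuous_fst).prodMk (csRK_pi_cont.comp continuous_snd))
    exact fun p => ⟨csRK_pi_mem _, csRK_pi_mem _⟩
  set C' : ℝ → ℝ := fun σ => C (csRK_pi σ) with hC'def
  have hC'c : Continuous C' := hC.comp_continuous csRK_pi_cont csRK_pi_mem
  -- agreement on [0,1]
  have hA'eq : ∀ τ ∈ I, ∀ σ ∈ I, A' τ σ = A τ σ := by
    intro τ hτ σ hσ
    simp [hA'def, csRK_pi_id hτ, csRK_pi_id hσ]
  -- the Banach space of continuous functions
  set X := C(Set.Icc (0:ℝ) 1, EuclideanSpace ℝ (Fin d))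
  haveI : Nonempty X := ⟨ContinuousMap.const _ z₀⟩
  -- extension of Z : X to ℝ
  set ext : X → ℝ → EuclideanSpace ℝ (Fin d) := fun Z t => Z (Set.projIcc (0:ℝ) 1 zero_le_one t) with hextdef
  have hextc : ∀ Z : X, Continuous (ext Z) := fun Z => Z.continuous.comp continuous_projIcc
  have hexteq : ∀ (Z : X) (t : ℝ) (ht : t ∈ I), ext Z t = Z ⟨t, ht⟩ := by
    intro Z t ht
    simp [hextdef, Set.projIcc_of_mem zero_le_one ht]
  -- the integrand
  set G : X → ℝ → ℝ → EuclideanSpace ℝ (Fin d) := fun Z τ σ => A' τ σ • f (t₀ + C' σ * h) (ext Z σ) with hGdef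
  have hGc : ∀ Z : X, Continuous fun p : ℝ × ℝ => G Z p.1 p.2 := by
    intro Z
    have h1 : Continuous fun p : ℝ × ℝ =>
        ((t₀ + C' p.2 * h, ext Z p.2) : ℝ × EuclideanSpace ℝ (Fin d)) :=
      (continuous_const.add ((hC'c.comp continuous_snd).mul
        continuous_const)).prodMk ((hextc Z).comp continuous_snd)
    have h2 : Continuous fun p : ℝ × ℝ => f (t₀ + C' p.2 * h) (ext Z p.2) := hfc.comp h1
    exact hA'c.smul h2
  have hGint : ∀ (Z : X) (τ : ℝ), IntervalIntegrable (fun σ => G Z τ σ) volume 0 1 := by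
    intro Z τ
    exact ((hGc Z).comp (continuous_const.prodMk continuous_id)).intervalIntegrable 0 1
  -- the Picard map
  set T : X → X := fun Z =>
    ⟨fun τ => z₀ + h • ∫ σ in (0:ℝ)..1, G Z (τ : ℝ) σ, by
      apply Continuous.add continuous_const
      refine Continuous.const_smul (g := fun τ : Set.Icc (0:ℝ) 1 => ∫ σ in (0:ℝ)..1, G Z (τ : ℝ) σ) ?_ h
      exact (intervalIntegral.continuous_parametric_intervalIntegral_of_continuous'
        (f := G Z) (hGc Z) 0 1).comp continuous_subtype_val⟩ with hTdef
  -- the sup constant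
  set M : ℝ := sSup ((fun τ => ∫ σ in (0:ℝ)..1, |A τ σ|) '' I) with hMdef
  -- boundedness of the image set
  obtain ⟨K, hK⟩ : ∃ K, ∀ p ∈ I ×ˢ I, |A p.1 p.2| ≤ K := by
    obtain ⟨K, hK⟩ := (IsCompact.exists_bound_of_continuousOn
      ((isCompact_Icc).prod isCompact_Icc) hA)
    exact ⟨K, fun p hp => by simpa using hK p hp⟩
  have hAbsInt : ∀ τ : ℝ, IntervalIntegrable (fun σ => |A' τ σ|) volume 0 1 := by
    intro τ
    exact (((hA'c.comp (continuous_const.prodMk continuous_id)).abs)).intervalIntegrable 0 1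
  have himg_eq : ∀ τ ∈ I, (∫ σ in (0:ℝ)..1, |A τ σ|) = ∫ σ in (0:ℝ)..1, |A' τ σ| := by
    intro τ hτ
    apply intervalIntegral.integral_congr
    intro σ hσ
    rw [Set.uIcc_of_le zero_le_one] at hσ
    show |A τ σ| = |A' τ σ|
    rw [hA'eq τ hτ σ hσ]
  have hbdd : BddAbove ((fun τ => ∫ σ in (0:ℝ)..1, |A τ σ|) '' I) := by
    refine ⟨K, ?_⟩
    rintro x ⟨τ, hτ, rfl⟩
    show (∫ σ in (0:ℝ)..1, |A τ σ|) ≤ K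
    rw [himg_eq τ hτ]
    calc (∫ σ in (0:ℝ)..1, |A' τ σ|) ≤ ∫ σ in (0:ℝ)..1, K := by
          apply intervalIntegral.integral_mono_on zero_le_one (hAbsInt τ)
            (intervalIntegrable_const)
          intro σ hσ
          have h5 : csRK_pi τ ∈ I := csRK_pi_mem _
          have h6 : csRK_pi σ ∈ I := csRK_pi_mem _
          exact hK (csRK_pi τ, csRK_pi σ) ⟨h5, h6⟩
      _ = K := by simp
  have hMem0 : (∫ σ in (0:ℝ)..1, |A (0:ℝ) σ|) ∈ ((fun τ => ∫ σ in (0:ℝ)..1, |A τ σ|) '' I) :=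
    ⟨0, by simp [hIdef], rfl⟩
  have hM0 : 0 ≤ M := by
    have h1 : (0:ℝ) ≤ ∫ σ in (0:ℝ)..1, |A (0:ℝ) σ| := by
      rw [himg_eq 0 (by simp [hIdef])]
      apply intervalIntegral.integral_nonneg zero_le_one
      intro σ _; exact abs_nonneg _
    exact le_trans h1 (le_csSup hbdd hMem0)
  have hLM : 0 < L * M := by
    rcases lt_or_eq_of_le (mul_nonneg hL.le hM0) with h1 | h1
    · exact h1
    · exfalso
      rw [← h1] at hstep
      simp at hstep
      linarith
  have hM : 0 < M := by
    by_contra h'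
    push_neg at h'
    nlinarith
  -- contraction constant
  set k : NNReal := ⟨h * (L * M), by positivity⟩ with hkdef
  have hk1 : (k : ℝ) < 1 := by
    have := (lt_div_iff₀ hLM).mp hstep
    exact this
  -- key bound on the primed integrals
  have hAbsM : ∀ τ ∈ I, (∫ σ in (0:ℝ)..1, |A' τ σ|) ≤ M := by
    intro τ hτ
    rw [← himg_eq τ hτ]
    exact le_csSup hbdd ⟨τ, hτ, rfl⟩
  -- contraction
  have hTcontr : ContractingWith k T := by
    constructor
    · exact_mod_cast hk1
    · rw [lipschitzWith_iff_dist_le_mul]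
      intro Z W
      rw [ContinuousMap.dist_le (by positivity)]
      intro τ
      have hτI : (τ : ℝ) ∈ I := τ.2
      set D : ℝ := dist Z W with hDdef
      have hD0 : 0 ≤ D := dist_nonneg
      have hpt : ∀ σ : ℝ, ‖G Z (τ : ℝ) σ - G W (τ : ℝ) σ‖ ≤ |A' (τ : ℝ) σ| * (L * D) := by
        intro σ
        have h1 : G Z (τ : ℝ) σ - G W (τ : ℝ) σ
            = A' (τ : ℝ) σ • (f (t₀ + C' σ * h) (ext Z σ) - f (t₀ + C' σ * h) (ext W σ)) := by
          simp [hGdef, smul_sub]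
        rw [h1, norm_smul, Real.norm_eq_abs]
        apply mul_le_mul_of_nonneg_left _ (abs_nonneg _)
        calc ‖f (t₀ + C' σ * h) (ext Z σ) - f (t₀ + C' σ * h) (ext W σ)‖
            ≤ L * ‖ext Z σ - ext W σ‖ := hf _ _ _
          _ ≤ L * D := by
              apply mul_le_mul_of_nonneg_left _ hL.le
              have : ‖ext Z σ - ext W σ‖
                  = dist (Z (Set.projIcc (0:ℝ) 1 zero_le_one σ))
                      (W (Set.projIcc (0:ℝ) 1 zero_le_one σ)) := by
                rw [dist_eq_norm]
              rw [this]
              exact ContinuousMap.dist_apply_le_dist _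
      have hdiffint : IntervalIntegrable
          (fun σ => G Z (τ : ℝ) σ - G W (τ : ℝ) σ) volume 0 1 :=
        (hGint Z _).sub (hGint W _)
      calc dist (T Z τ) (T W τ)
          = |h| * dist (∫ σ in (0:ℝ)..1, G Z (τ : ℝ) σ)
              (∫ σ in (0:ℝ)..1, G W (τ : ℝ) σ) := by
            have hTZ : T Z τ = z₀ + h • ∫ σ in (0:ℝ)..1, G Z (τ:ℝ) σ := rfl
            have hTW : T W τ = z₀ + h • ∫ σ in (0:ℝ)..1, G W (τ:ℝ) σ := rfl
            rw [hTZ, hTW, dist_add_left, dist_smul₀, Real.norm_eq_abs]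
        _ ≤ |h| * ∫ σ in (0:ℝ)..1, ‖G Z (τ : ℝ) σ - G W (τ : ℝ) σ‖ := by
            apply mul_le_mul_of_nonneg_left _ (abs_nonneg _)
            rw [dist_eq_norm, ← intervalIntegral.integral_sub (hGint Z _) (hGint W _)]
            exact intervalIntegral.norm_integral_le_integral_norm zero_le_one
        _ ≤ |h| * ∫ σ in (0:ℝ)..1, |A' (τ : ℝ) σ| * (L * D) := by
            apply mul_le_mul_of_nonneg_left _ (abs_nonneg _)
            apply intervalIntegral.integral_mono_on zero_le_one hdiffint.norm
              ((hAbsInt _).mul_const _)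
            exact fun σ _ => hpt σ
        _ = |h| * ((∫ σ in (0:ℝ)..1, |A' (τ : ℝ) σ|) * (L * D)) := by
            rw [intervalIntegral.integral_mul_const]
        _ ≤ (k : ℝ) * D := by
            have h2 : (∫ σ in (0:ℝ)..1, |A' (τ : ℝ) σ|) ≤ M := hAbsM _ hτI
            have h3 : (0:ℝ) ≤ ∫ σ in (0:ℝ)..1, |A' (τ : ℝ) σ| :=
              intervalIntegral.integral_nonneg zero_le_one (fun σ _ => abs_nonneg _)
            have hk : (k : ℝ) = h * (L * M) := rfl
            rw [abs_of_pos hh, hk]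
            nlinarith [mul_le_mul_of_nonneg_left h2 (by positivity : (0:ℝ) ≤ h * L * D)]
  -- the fixed point
  haveI : CompleteSpace X := by infer_instance
  set Zc : X := ContractingWith.fixedPoint T hTcontr with hZcdef
  have hZcfix : T Zc = Zc := hTcontr.fixedPoint_isFixedPt
  refine ⟨ext Zc, (hextc Zc).continuousOn, ?_, ?_⟩
  · intro τ hτ
    have h1 : ext Zc τ = (T Zc) ⟨τ, hτ⟩ := by
      rw [hZcfix]; exact hexteq Zc τ hτ
    rw [h1]
    show z₀ + h • (∫ σ in (0:ℝ)..1, G Zc τ σ) = _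
    congr 1
    congr 1
    apply intervalIntegral.integral_congr
    intro σ hσ
    rw [Set.uIcc_of_le zero_le_one] at hσ
    show A' τ σ • f (t₀ + C' σ * h) (ext Zc σ) = A τ σ • f (t₀ + C σ * h) (ext Zc σ)
    rw [hA'eq τ hτ σ hσ]
    simp [hC'def, csRK_pi_id hσ]
  · intro W hWc hWeq
    set Wc : X := ⟨fun τ => W τ, hWc.restrict⟩ with hWcdef
    have hWext : ∀ σ ∈ I, ext Wc σ = W σ := by
      intro σ hσ
      rw [hexteq Wc σ hσ]
      rfl
    have hWfix : Function.IsFixedPt T Wc := by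
      apply ContinuousMap.ext
      intro τ
      have hτI : (τ : ℝ) ∈ I := τ.2
      show z₀ + h • (∫ σ in (0:ℝ)..1, G Wc (τ : ℝ) σ) = Wc τ
      have h2 : Wc τ = W (τ : ℝ) := rfl
      rw [h2, hWeq _ hτI]
      congr 1
      congr 1
      apply intervalIntegral.integral_congr
      intro σ hσ
      rw [Set.uIcc_of_le zero_le_one] at hσ
      show A' (τ:ℝ) σ • f (t₀ + C' σ * h) (ext Wc σ) = A (τ:ℝ) σ • f (t₀ + C σ * h) (W σ)
      rw [hA'eq _ hτI σ hσ, hWext σ hσ]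
      simp [hC'def, csRK_pi_id hσ]
    have hWZ : Wc = Zc := hTcontr.fixedPoint_unique hWfix
    intro t ht
    have : W t = Wc ⟨t, ht⟩ := rfl
    rw [this, hWZ]
    exact (hexteq Zc t ht).symm
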